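/- Meyer–Floudas facet validity (Case I, first facet): let V̲_l ≤ V_l ≤ V̄_l, V̲_m ≤ V_m ≤ V̄_m with 0 ≤ V̲_l and 0 ≤ V̲_m, and let s̲ ≤ S ≤ s̄ with s̄ ≤ 0. Then V_l V_m S ≥ V̄_m s̲ V_l + V̲_l s̲ V_m + V̲_l V̲_m S − V̲_l V̄_m s̲ − V̲_l V̲_m s̲. -/
import Mathlib


theorem stmt16 (Vl Vm S Vll Vlu Vml Vmu sl su : ℝ)
    (hVl1 : Vll ≤ Vl) (hVl2 : Vl ≤ Vlu) (hVm1 : Vml ≤ Vm) (hVm2 : Vm ≤ Vmu)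
    (hVl0 : 0 ≤ Vll) (hVm0 : 0 ≤ Vml)
    (hS1 : sl ≤ S) (hS2 : S ≤ su) (hsu : su ≤ 0) :
    Vl * Vm * S ≥ Vmu * sl * Vl + Vll * sl * Vm + Vll * Vml * S
      - Vll * Vmu * sl - Vll * Vml * sl := by
  nlinarith [mul_nonneg (mul_nonneg hVl0 (sub_nonneg.2 hVm1)) (sub_nonneg.2 hS1), mul_nonneg (sub_nonneg.2 hVl1) (mul_nonneg (le_trans hVm0 hVm1) (sub_nonneg.2 hS1)), mul_nonneg (sub_nonneg.2 hVl1) (mul_nonneg (sub_nonneg.2 hVm2) (neg_nonneg.2 (hS1.trans (hS2.trans hsu))))]
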